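/- Let F ∈ ℝ^{m×m} be symmetric positive definite and let L_F ∈ ℝ^{m×m} be invertible with L_Fᵀ L_F = F. Let Y ∈ ℝ^{c×c}, Z ∈ ℝ^{m×c}, let (U, V) be the Cayley transform of (Y, Z), let γ ∈ ℝ^c have all entries nonzero, and set Γ = diag(γ), Λ = Γ², Ĉ = √2 · Γ⁻¹ Vᵀ L_F, L = √2 · U Γ, and X = Lᵀ L. Then the block matrix [[F, −Ĉᵀ Λ], [−Λ Ĉ, 2Λ − X]] is positive semidefinite. -/

import Mathlib

open Matrix

/-- The parameterization `Ĉ = √2 Γ⁻¹ Vᵀ L_F` of a 1-D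
convolutional layer (with `(U,V)` the Cayley transform of `(Y,Z)`,
`Γ = diag(γ)`, `Λ = Γ²`, `L = √2 U Γ`, `X = Lᵀ L`, `L_Fᵀ L_F = F`) renders
the LMI `[[F, −Ĉᵀ Λ], [−Λ Ĉ, 2Λ − X]]` positive semidefinite. -/
theorem conv1d_parameterization_satisfies_LMI
    (m c : ℕ)
    (F : Matrix (Fin m) (Fin m) ℝ) (hF : F.PosDef)
    (LF : Matrix (Fin m) (Fin m) ℝ) (hLF : IsUnit LF) (hLFF : LFᵀ * LF = F)
    (Y : Matrix (Fin c) (Fin c) ℝ) (Z : Matrix (Fin m) (Fin c) ℝ)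
    (M : Matrix (Fin c) (Fin c) ℝ) (hM : M = Y - Yᵀ + Zᵀ * Z)
    (U : Matrix (Fin c) (Fin c) ℝ) (hU : U = (1 + M)⁻¹ * (1 - M))
    (V : Matrix (Fin m) (Fin c) ℝ) (hV : V = (2 : ℝ) • (Z * (1 + M)⁻¹))
    (γ : Fin c → ℝ) (hγ : ∀ i, γ i ≠ 0)
    (Γ : Matrix (Fin c) (Fin c) ℝ) (hΓ : Γ = Matrix.diagonal γ)
    (Λ : Matrix (Fin c) (Fin c) ℝ) (hΛ : Λ = Γ * Γ)
    (Ch : Matrix (Fin c) (Fin m) ℝ) (hCh : Ch = Real.sqrt 2 • (Γ⁻¹ * Vᵀ * LF))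
    (L : Matrix (Fin c) (Fin c) ℝ) (hL : L = Real.sqrt 2 • (U * Γ))
    (X : Matrix (Fin c) (Fin c) ℝ) (hX : X = Lᵀ * L) :
    (Matrix.fromBlocks F (-(Chᵀ * Λ)) (-(Λ * Ch)) ((2 : ℝ) • Λ - X)).PosSemidef := by
  -- Γ facts
  have hdetΓ : IsUnit Γ.det := by
    rw [hΓ, det_diagonal]
    exact isUnit_iff_ne_zero.mpr (Finset.prod_ne_zero_iff.mpr fun i _ => hγ i)
  have hΓiΓ : Γ⁻¹ * Γ = 1 := nonsing_inv_mul _ hdetΓ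
  have hΓΓi : Γ * Γ⁻¹ = 1 := mul_nonsing_inv _ hdetΓ
  have hΓT : Γᵀ = Γ := by rw [hΓ, diagonal_transpose]
  have hΓiT : Γ⁻¹ᵀ = Γ⁻¹ := by rw [transpose_nonsing_inv, hΓT]
  -- transpose of M
  have hMT : Mᵀ = Yᵀ - Y + Zᵀ * Z := by
    rw [hM]; simp [transpose_add, transpose_sub, transpose_mul]
  have hMMT : M + Mᵀ = (2 : ℝ) • (Zᵀ * Z) := by
    rw [hMT, hM, two_smul]; abel
  -- invertibility of N = 1 + M
  set N := (1 : Matrix (Fin c) (Fin c) ℝ) + M with hN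
  have hP : ((1 : Matrix (Fin c) (Fin c) ℝ) + Zᵀ * Z).PosDef := by
    have h1 := Matrix.posSemidef_conjTranspose_mul_self Z
    rw [conjTranspose_eq_transpose_of_trivial] at h1
    exact Matrix.PosDef.add_posSemidef Matrix.PosDef.one h1
  have hNdet : IsUnit N.det := by
    rw [isUnit_iff_ne_zero]
    intro h
    obtain ⟨v, hv0, hv⟩ := (Matrix.exists_mulVec_eq_zero_iff).mpr h
    have h1 : v ⬝ᵥ (N *ᵥ v) = 0 := by rw [hv, dotProduct_zero]
    have h2 : v ⬝ᵥ (Nᵀ *ᵥ v) = 0 := by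
      rw [dotProduct_mulVec, vecMul_transpose, hv, zero_dotProduct]
    have hNNT : N + Nᵀ = (2 : ℝ) • ((1 : Matrix (Fin c) (Fin c) ℝ) + Zᵀ * Z) := by
      rw [hN, transpose_add, transpose_one, smul_add, ← hMMT, two_smul]; abel
    have key : v ⬝ᵥ (((2 : ℝ) • ((1 : Matrix (Fin c) (Fin c) ℝ) + Zᵀ * Z)) *ᵥ v) = 0 := by
      rw [← hNNT, add_mulVec, dotProduct_add, h1, h2, add_zero]
    rw [smul_mulVec, dotProduct_smul, smul_eq_mul] at key
    have hpos := hP.dotProduct_mulVec_pos hv0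
    simp only [star_trivial] at hpos
    linarith
  have hNTdet : IsUnit Nᵀ.det := by rwa [det_transpose]
  have hNiN : N⁻¹ * N = 1 := nonsing_inv_mul _ hNdet
  have hNNi : N * N⁻¹ = 1 := mul_nonsing_inv _ hNdet
  have hNTi : (Nᵀ)⁻¹ * Nᵀ = 1 := nonsing_inv_mul _ hNTdet
  have hNTi' : Nᵀ * (Nᵀ)⁻¹ = 1 := mul_nonsing_inv _ hNTdet
  -- commutation lemmas
  have hABc : Nᵀ * (1 - Mᵀ) = (1 - Mᵀ) * Nᵀ := by
    rw [hN, transpose_add, transpose_one]; noncomm_ring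
  have hABc2 : N * (1 - M) = (1 - M) * N := by
    rw [hN]; noncomm_ring
  have comm : (1 - Mᵀ) * (Nᵀ)⁻¹ = (Nᵀ)⁻¹ * (1 - Mᵀ) := by
    calc (1 - Mᵀ) * (Nᵀ)⁻¹ = ((Nᵀ)⁻¹ * Nᵀ) * ((1 - Mᵀ) * (Nᵀ)⁻¹) := by rw [hNTi, one_mul]
    _ = (Nᵀ)⁻¹ * ((Nᵀ * (1 - Mᵀ)) * (Nᵀ)⁻¹) := by noncomm_ring
    _ = (Nᵀ)⁻¹ * ((1 - Mᵀ) * (Nᵀ * (Nᵀ)⁻¹)) := by rw [hABc]; noncomm_ring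
    _ = (Nᵀ)⁻¹ * (1 - Mᵀ) := by rw [hNTi', mul_one]
  have comm2 : N⁻¹ * (1 - M) = (1 - M) * N⁻¹ := by
    calc N⁻¹ * (1 - M) = (N⁻¹ * (1 - M)) * (N * N⁻¹) := by rw [hNNi, mul_one]
    _ = N⁻¹ * (((1 - M) * N) * N⁻¹) := by noncomm_ring
    _ = N⁻¹ * ((N * (1 - M)) * N⁻¹) := by rw [hABc2]
    _ = (N⁻¹ * N) * ((1 - M) * N⁻¹) := by noncomm_ring
    _ = (1 - M) * N⁻¹ := by rw [hNiN, one_mul]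
  -- key identity  UᵀU + VᵀV = 1
  have hUT : Uᵀ = (1 - Mᵀ) * (Nᵀ)⁻¹ := by
    rw [hU, transpose_mul, transpose_nonsing_inv, transpose_sub, transpose_one]
  have hVT : Vᵀ = (2 : ℝ) • ((Nᵀ)⁻¹ * Zᵀ) := by
    rw [hV, transpose_smul, transpose_mul, transpose_nonsing_inv]
  have hbracket : (1 - Mᵀ) * (1 - M) + (4 : ℝ) • (Zᵀ * Z) = Nᵀ * N := by
    have h4 : (4 : ℝ) • (Zᵀ * Z) = (2 : ℝ) • (M + Mᵀ) := by
      rw [hMMT, smul_smul]; norm_num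
    have e1 : (1 - Mᵀ) * (1 - M) = 1 - M - Mᵀ + Mᵀ * M := by noncomm_ring
    have e2 : Nᵀ * N = 1 + M + Mᵀ + Mᵀ * M := by
      rw [hN, transpose_add, transpose_one]; noncomm_ring
    rw [h4, e1, e2]; module
  have term1 : Uᵀ * U = (Nᵀ)⁻¹ * ((1 - Mᵀ) * (1 - M)) * N⁻¹ := by
    rw [hUT, hU, comm, comm2]; noncomm_ring
  have term2 : Vᵀ * V = (Nᵀ)⁻¹ * ((4 : ℝ) • (Zᵀ * Z)) * N⁻¹ := by
    rw [hVT, hV, Matrix.smul_mul, Matrix.mul_smul, smul_smul]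
    rw [Matrix.mul_smul, Matrix.smul_mul]
    norm_num
    simp only [Matrix.mul_assoc]
  have key : Uᵀ * U + Vᵀ * V = 1 := by
    rw [term1, term2, ← add_mul, ← mul_add, hbracket]
    calc (Nᵀ)⁻¹ * (Nᵀ * N) * N⁻¹ = ((Nᵀ)⁻¹ * Nᵀ) * (N * N⁻¹) := by noncomm_ring
    _ = 1 := by rw [hNTi, hNNi, one_mul]
  have hVV : Vᵀ * V = 1 - Uᵀ * U := by rw [← key]; abel
  -- the blocks
  set B : Matrix (Fin m) (Fin c) ℝ := -(Real.sqrt 2 • (V * Γ)) with hB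
  have hs2 : Real.sqrt 2 * Real.sqrt 2 = 2 := Real.mul_self_sqrt (by norm_num)
  have hcan1 : Γ⁻¹ * (Γ * Γ) = Γ := by rw [← Matrix.mul_assoc, hΓiΓ, one_mul]
  have hcan2 : ∀ W : Matrix (Fin c) (Fin m) ℝ, Γ * (Γ⁻¹ * W) = W := fun W => by
    rw [← Matrix.mul_assoc, hΓΓi, Matrix.one_mul]
  have e12 : LFᵀ * B = -(Chᵀ * Λ) := by
    rw [hB, hCh, hΛ]
    simp only [transpose_smul, transpose_mul, hΓiT, transpose_transpose,
      Matrix.mul_neg, Matrix.neg_mul, Matrix.smul_mul, Matrix.mul_smul,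
      Matrix.mul_assoc, hcan1]
  have e21 : Bᵀ * LF = -(Λ * Ch) := by
    rw [hB, hCh, hΛ]
    simp only [transpose_neg, transpose_smul, transpose_mul, hΓT,
      Matrix.mul_neg, Matrix.neg_mul, Matrix.smul_mul, Matrix.mul_smul,
      Matrix.mul_assoc, hcan2]
  have e22 : Bᵀ * B = (2 : ℝ) • Λ - X := by
    have hVtV : (Real.sqrt 2 • (V * Γ))ᵀ * (Real.sqrt 2 • (V * Γ))
        = (2 : ℝ) • (Γ * (Vᵀ * V) * Γ) := by
      simp only [transpose_smul, transpose_mul, hΓT, Matrix.smul_mul, Matrix.mul_smul,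
        smul_smul, hs2, Matrix.mul_assoc]
    have hX2 : X = (2 : ℝ) • (Γ * (Uᵀ * U) * Γ) := by
      rw [hX, hL]
      simp only [transpose_smul, transpose_mul, hΓT, Matrix.smul_mul, Matrix.mul_smul,
        smul_smul, hs2, Matrix.mul_assoc]
    rw [hB, transpose_neg, Matrix.neg_mul, Matrix.mul_neg, neg_neg, hVtV, hVV, hX2, hΛ,
      ← smul_sub]
    congr 1
    noncomm_ring
  have hW : Matrix.fromBlocks F (-(Chᵀ * Λ)) (-(Λ * Ch)) ((2 : ℝ) • Λ - X)
      = (Matrix.fromCols LF B)ᴴ * Matrix.fromCols LF B := by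
    rw [conjTranspose_eq_transpose_of_trivial, transpose_fromCols, fromRows_mul_fromCols,
      hLFF, e12, e21, e22]
  rw [hW]
  exact Matrix.posSemidef_conjTranspose_mul_self _
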